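/- Suppose L₀ is a sequential contraction of L. Then the rank of the Killing form does not increase: finrank ℝ (LinearMap.range (killingForm ℝ L₀)) ≤ finrank ℝ (LinearMap.range (killingForm ℝ L)), where the Killing form is viewed as a linear map from the Lie algebra to its dual. -/

import Mathlib

open Filter Module

/-- `L₀` is a sequential contraction of the real Lie algebra `L`: there is a sequence of
real-linear equivalences `T p : L ≃ₗ[ℝ] L₀` such that the transported brackets converge to the
bracket of `L₀`. -/
def IsSequentialContraction (L L₀ : Type*) [LieRing L] [LieAlgebra ℝ L]
    [LieRing L₀] [LieAlgebra ℝ L₀] [TopologicalSpace L₀] : Prop :=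
  ∃ T : ℕ → (L ≃ₗ[ℝ] L₀), ∀ x y : L₀,
    Tendsto (fun p => T p ⁅(T p).symm x, (T p).symm y⁆) atTop (nhds ⁅x, y⁆)

section Aux

variable {L L₀ : Type*} [LieRing L] [LieAlgebra ℝ L] [LieRing L₀] [LieAlgebra ℝ L₀]
    [Module.Finite ℝ L] [Module.Finite ℝ L₀]
    [TopologicalSpace L₀] [IsTopologicalAddGroup L₀] [ContinuousSMul ℝ L₀] [T2Space L₀]

lemma tendsto_killing_aux (T : ℕ → (L ≃ₗ[ℝ] L₀))
    (hT : ∀ x y : L₀,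
      Tendsto (fun p => T p ⁅(T p).symm x, (T p).symm y⁆) atTop (nhds ⁅x, y⁆)) (x y : L₀) :
    Tendsto (fun p => killingForm ℝ L ((T p).symm x) ((T p).symm y)) atTop
      (nhds (killingForm ℝ L₀ x y)) := by
  classical
  have : FiniteDimensional ℝ L₀ := inferInstance
  set b := finBasis ℝ L₀ with hb
  -- trace of composition formula
  have htr : ∀ f g : Module.End ℝ L₀, LinearMap.trace ℝ L₀ (f ∘ₗ g) =
      ∑ i, ∑ j, b.repr (g (b i)) j * b.repr (f (b j)) i := by
    intro f g
    rw [LinearMap.trace_eq_matrix_trace ℝ b, LinearMap.toMatrix_comp b b b, Matrix.trace]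
    simp only [Matrix.diag_apply, Matrix.mul_apply, LinearMap.toMatrix_apply]
    exact Finset.sum_congr rfl fun j _ => Finset.sum_congr rfl fun i _ => mul_comm _ _
  -- the pulled-back killing form as a trace on L₀
  have hκ : ∀ p, killingForm ℝ L ((T p).symm x) ((T p).symm y) =
      ∑ i, ∑ j, b.repr (T p ⁅(T p).symm y, (T p).symm (b i)⁆) j *
        b.repr (T p ⁅(T p).symm x, (T p).symm (b j)⁆) i := by
    intro p
    rw [killingForm_apply_apply, ← LinearMap.trace_conj' _ (T p : L ≃ₗ[ℝ] L₀),
      LinearEquiv.conj_comp, htr]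
    simp [LinearEquiv.conj_apply_apply, LieAlgebra.ad_apply]
  have hκ₀ : killingForm ℝ L₀ x y =
      ∑ i, ∑ j, b.repr ⁅y, b i⁆ j * b.repr ⁅x, b j⁆ i := by
    rw [killingForm_apply_apply, htr]
    simp [LieAlgebra.ad_apply]
  simp only [hκ, hκ₀]
  refine tendsto_finset_sum _ fun i _ => tendsto_finset_sum _ fun j _ => Tendsto.mul ?_ ?_
  · exact ((b.coord j).continuous_of_finiteDimensional.tendsto _).comp (hT y (b i))
  · exact ((b.coord i).continuous_of_finiteDimensional.tendsto _).comp (hT x (b j))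

end Aux


set_option maxHeartbeats 1600000 in
theorem killingForm_rank_le_of_contraction' {L L₀ : Type*} [LieRing L] [LieAlgebra ℝ L]
    [LieRing L₀] [LieAlgebra ℝ L₀]
    [Module.Finite ℝ L] [Module.Finite ℝ L₀]
    [TopologicalSpace L₀] [IsTopologicalAddGroup L₀] [ContinuousSMul ℝ L₀] [T2Space L₀]
    (T : ℕ → (L ≃ₗ[ℝ] L₀))
    (hT : ∀ x y : L₀,
      Tendsto (fun p => T p ⁅(T p).symm x, (T p).symm y⁆) atTop (nhds ⁅x, y⁆)) :
    finrank ℝ (LinearMap.range (killingForm ℝ L₀)) ≤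
      finrank ℝ (LinearMap.range (killingForm ℝ L)) := by
  classical
  have : FiniteDimensional ℝ L₀ := inferInstance
  have : FiniteDimensional ℝ L := inferInstance
  have : FiniteDimensional ℝ (L₀ →ₗ[ℝ] ℝ) := LinearMap.finiteDimensional
  have : FiniteDimensional ℝ (L →ₗ[ℝ] ℝ) := LinearMap.finiteDimensional
  set S := LinearMap.range (killingForm ℝ L₀) with hS
  have hfree : Module.Free ℝ ↥S := Module.Free.of_divisionRing ℝ ↥S
  have hfin : Module.Finite ℝ ↥S := FiniteDimensional.finiteDimensional_submodule S
  set r := finrank ℝ S with hr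
  set c := finBasis ℝ S with hc
  -- choose preimages of the basis of the range
  have hx : ∀ i : Fin r, ∃ v : L₀, killingForm ℝ L₀ v = (c i : Module.Dual ℝ L₀) :=
    fun i => LinearMap.mem_range.mp (c i).2
  choose x hx using hx
  have hφ : LinearIndependent ℝ (fun i => killingForm ℝ L₀ (x i)) := by
    have h1 : LinearIndependent ℝ (fun i => (c i : Module.Dual ℝ L₀)) :=
      c.linearIndependent.map_injOn S.subtype S.injective_subtype.injOn
    simpa only [hx] using h1
  -- the joint evaluation map is surjective
  set Φ : L₀ →ₗ[ℝ] (Fin r → ℝ) := LinearMap.pi (fun i => killingForm ℝ L₀ (x i)) with hΦdef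
  have hΦ : Function.Surjective Φ := by
    by_contra hsurj
    have hlt : LinearMap.range Φ < ⊤ :=
      lt_top_iff_ne_top.2 fun hh => hsurj (LinearMap.range_eq_top.mp hh)
    obtain ⟨f, hf0, hf⟩ :=
      (LinearMap.range Φ).exists_dual_map_eq_bot_of_lt_top hlt inferInstance
    have hfΦ : ∀ v : L₀, f (Φ v) = 0 := by
      intro v
      have hmem : f (Φ v) ∈ (LinearMap.range Φ).map f :=
        Submodule.mem_map_of_mem (LinearMap.mem_range_self _ _)
      rw [hf] at hmem
      simpa using hmem
    set g : Fin r → ℝ := fun i => f (Pi.single i 1) with hg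
    have hfw : ∀ w : Fin r → ℝ, f w = ∑ i, w i * g i := by
      intro w
      have hw : w = ∑ i, w i • Pi.single i (1 : ℝ) := by
        funext j
        simp [Finset.sum_apply, Pi.single_apply, eq_comm]
      calc f w = f (∑ i, w i • Pi.single i (1 : ℝ)) := by rw [← hw]
        _ = ∑ i, w i * g i := by simp [hg, smul_eq_mul]
    have hgz : ∀ i, g i = 0 := by
      have hzero : (∑ i, g i • killingForm ℝ L₀ (x i)) = 0 := by
        ext v
        have := hfΦ v
        rw [hfw] at this
        simpa [hΦdef, LinearMap.pi_apply, mul_comm] using this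
      exact Fintype.linearIndependent_iff.mp hφ g hzero
    apply hf0
    apply LinearMap.ext
    intro w
    rw [hfw]
    simp [hgz]
  choose y hy using fun j => hΦ (Pi.single j (1 : ℝ))
  -- the limit matrix is the identity, so eventually the matrices are invertible
  set M : ℕ → Matrix (Fin r) (Fin r) ℝ :=
    fun p => Matrix.of fun i j => killingForm ℝ L ((T p).symm (x i)) ((T p).symm (y j)) with hM
  have hMlim : Tendsto M atTop (nhds (1 : Matrix (Fin r) (Fin r) ℝ)) := by
    refine tendsto_pi_nhds.2 ?_
    intro i
    rw [tendsto_pi_nhds]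
    intro j
    have h1 := tendsto_killing_aux T hT (x i) (y j)
    have h2 : killingForm ℝ L₀ (x i) (y j) = (1 : Matrix (Fin r) (Fin r) ℝ) i j := by
      have h3 := congrFun (hy j) i
      simp only [hΦdef, LinearMap.pi_apply] at h3
      rw [h3]
      simp [Matrix.one_apply, Pi.single_apply, eq_comm]
    rw [h2] at h1
    exact h1
  have hdet : Tendsto (fun p => (M p).det) atTop (nhds (1 : ℝ)) := by
    have := (Continuous.matrix_det continuous_id).tendsto (1 : Matrix (Fin r) (Fin r) ℝ)
    simpa [Function.comp_def] using this.comp hMlim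
  obtain ⟨p, hp⟩ := (hdet.eventually_ne one_ne_zero).exists
  -- the pulled-back functionals are independent
  have hψ : LinearIndependent ℝ (fun i => killingForm ℝ L ((T p).symm (x i))) := by
    rw [Fintype.linearIndependent_iff]
    intro g hg i
    have hvec : Matrix.vecMul g (M p) = Matrix.vecMul 0 (M p) := by
      funext j
      have h0 : (∑ k, g k • killingForm ℝ L ((T p).symm (x k))) ((T p).symm (y j)) = 0 := by
        rw [hg]; simp
      simp only [LinearMap.sum_apply, LinearMap.smul_apply, smul_eq_mul] at h0
      simp [Matrix.vecMul, dotProduct, hM, h0]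
    have h1 : Matrix.vecMul g (M p) = 0 := by rw [hvec, Matrix.zero_vecMul]
    have hg0 : g = 0 := by
      calc g = Matrix.vecMul g 1 := (Matrix.vecMul_one g).symm
        _ = Matrix.vecMul g ((M p) * (M p)⁻¹) := by
            rw [Matrix.mul_nonsing_inv _ (isUnit_iff_ne_zero.2 hp)]
        _ = Matrix.vecMul (Matrix.vecMul g (M p)) ((M p)⁻¹) := by rw [Matrix.vecMul_vecMul]
        _ = 0 := by rw [h1, Matrix.zero_vecMul]
    exact congrFun hg0 i
  -- these independent functionals live in the range of the Killing form of L
  have hfin2 : Module.Finite ℝ ↥(LinearMap.range (killingForm ℝ L)) :=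
    FiniteDimensional.finiteDimensional_submodule _
  have hspan : Submodule.span ℝ
      (Set.range fun i => killingForm ℝ L ((T p).symm (x i))) ≤
        LinearMap.range (killingForm ℝ L) := by
    rw [Submodule.span_le]
    rintro - ⟨i, rfl⟩
    exact LinearMap.mem_range_self _ _
  have hle := Submodule.finrank_mono hspan
  rw [finrank_span_eq_card hψ] at hle
  simpa using hle

/-- Under a sequential contraction, the rank of the Killing form does not increase. -/
theorem killingForm_rank_le_of_contraction {L L₀ : Type*} [LieRing L] [LieAlgebra ℝ L] [LieRing L₀] [LieAlgebra ℝ L₀]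
    [Module.Finite ℝ L] [Module.Finite ℝ L₀]
    [TopologicalSpace L₀] [IsTopologicalAddGroup L₀] [ContinuousSMul ℝ L₀] [T2Space L₀]
    (h : IsSequentialContraction L L₀) :
    finrank ℝ (LinearMap.range (killingForm ℝ L₀)) ≤
      finrank ℝ (LinearMap.range (killingForm ℝ L)) := by
  obtain ⟨T, hT⟩ := h
  exact killingForm_rank_le_of_contraction' T hT
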